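/- Let (U₁, U₂) be a type I pair: upper triangular matrices with internal relations αᵢγᵢ = γᵢαᵢ = 1 and αᵢβᵢ = βᵢγᵢ, and mutual relations α₁α₂ = qα₂α₁, α₁β₂ = qβ₂γ₁, β₁γ₂ = qα₂β₁. Then for all integers n, m, the entries of U₁^n U₂^m = [[α(n,m), β(n,m)], [0, γ(n,m)]] satisfy α(n,m)β(n,m) = β(n,m)γ(n,m). -/

import Mathlib

/-- If `x y = c • (y x⁻¹)` then `xⁿ y = cⁿ • (y x⁻ⁿ)` for all integers `n`. -/
lemma zpow_swap {k A : Type*} [Field k] [Ring A] [Algebra k A]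
    (c : k) (hc : c ≠ 0) (x : Aˣ) (y : A)
    (h : (x : A) * y = c • (y * ((x⁻¹ : Aˣ) : A))) :
    ∀ n : ℤ, ((x ^ n : Aˣ) : A) * y = c ^ n • (y * ((x ^ (-n) : Aˣ) : A)) := by
  have hinv : ((x⁻¹ : Aˣ) : A) * y = c⁻¹ • (y * (x : A)) := by
    have h1 : y = c • (((x⁻¹ : Aˣ) : A) * y * ((x⁻¹ : Aˣ) : A)) := by
      have := congrArg (fun z => ((x⁻¹ : Aˣ) : A) * z) h
      simpa [mul_assoc, mul_smul_comm] using this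
    have h2 : y * (x : A) = c • (((x⁻¹ : Aˣ) : A) * y) := by
      calc y * (x : A) = c • (((x⁻¹:Aˣ):A) * y * ((x⁻¹:Aˣ):A)) * (x:A) := by rw [← h1]
        _ = c • (((x⁻¹:Aˣ):A) * y * (((x⁻¹:Aˣ):A) * (x:A))) := by
              rw [smul_mul_assoc, mul_assoc]
        _ = c • (((x⁻¹ : Aˣ) : A) * y) := by rw [Units.inv_mul, mul_one]
    rw [h2, smul_smul, inv_mul_cancel₀ hc, one_smul]
  intro n
  induction n using Int.induction_on with
  | zero => simp
  | succ n ih =>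
      have e0 : ((x ^ ((n:ℤ) + 1) : Aˣ) : A) = (x:A) * ((x ^ (n:ℤ) : Aˣ) : A) := by
        rw [← Units.val_mul, ← zpow_one_add x n, add_comm]
      have e1 : (x⁻¹ : Aˣ) * x ^ (-(n:ℤ)) = x ^ (-((n:ℤ)+1)) := by
        rw [← zpow_neg_one, ← zpow_add]; ring_nf
      rw [e0, mul_assoc, ih, mul_smul_comm, ← mul_assoc, h, smul_mul_assoc, smul_smul,
        mul_assoc, ← Units.val_mul, e1, ← zpow_add_one₀ hc]
  | pred n ih =>
      have e0 : ((x ^ (-(n:ℤ) - 1) : Aˣ) : A) = ((x⁻¹:Aˣ) : A) * ((x ^ (-(n:ℤ)) : Aˣ) : A) := by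
        rw [← Units.val_mul, ← zpow_neg_one, ← zpow_add x]; ring_nf
      have e1 : x * x ^ (-(-(n:ℤ))) = x ^ (-(-(n:ℤ) - 1)) := by
        rw [show (-(-(n:ℤ) - 1)) = 1 + (-(-(n:ℤ))) by ring, zpow_add, zpow_one]
      rw [e0, mul_assoc, ih, mul_smul_comm, ← mul_assoc, hinv, smul_mul_assoc, smul_smul,
        mul_assoc, ← Units.val_mul, e1, ← zpow_sub_one₀ hc]


/-- If `x y = c • (y x)` then `xⁿ y = cⁿ • (y xⁿ)` for all integers `n`. -/
lemma zpow_swap_u {k A : Type*} [Field k] [Ring A] [Algebra k A]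
    (c : k) (hc : c ≠ 0) (x : Aˣ) (y : A)
    (h : (x : A) * y = c • (y * (x : A))) :
    ∀ n : ℤ, ((x ^ n : Aˣ) : A) * y = c ^ n • (y * ((x ^ n : Aˣ) : A)) := by
  have hinv : ((x⁻¹ : Aˣ) : A) * y = c⁻¹ • (y * ((x⁻¹ : Aˣ) : A)) := by
    have h1 : ((x⁻¹:Aˣ):A) * ((x:A) * y) * ((x⁻¹:Aˣ):A)
        = ((x⁻¹:Aˣ):A) * (c • (y * (x:A))) * ((x⁻¹:Aˣ):A) := by rw [h]
    have h2 : y * ((x⁻¹:Aˣ):A) = c • (((x⁻¹:Aˣ):A) * y) := by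
      calc y * ((x⁻¹:Aˣ):A) = ((x⁻¹:Aˣ):A) * ((x:A) * y) * ((x⁻¹:Aˣ):A) := by
            rw [← mul_assoc, Units.inv_mul, one_mul]
        _ = ((x⁻¹:Aˣ):A) * (c • (y * (x:A))) * ((x⁻¹:Aˣ):A) := by rw [h1]
        _ = c • (((x⁻¹:Aˣ):A) * y * ((x:A) * ((x⁻¹:Aˣ):A))) := by
            rw [mul_smul_comm, smul_mul_assoc, mul_assoc, mul_assoc, mul_assoc]
        _ = c • (((x⁻¹:Aˣ):A) * y) := by rw [Units.mul_inv, mul_one]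
    rw [h2, smul_smul, inv_mul_cancel₀ hc, one_smul]
  intro n
  induction n using Int.induction_on with
  | zero => simp
  | succ n ih =>
      have e0 : ((x ^ ((n:ℤ) + 1) : Aˣ) : A) = (x:A) * ((x ^ (n:ℤ) : Aˣ) : A) := by
        rw [← Units.val_mul, ← zpow_one_add x n, add_comm]
      have e1 : (x : Aˣ) * x ^ ((n:ℤ)) = x ^ ((n:ℤ)+1) := by
        rw [show ((n:ℤ) + 1) = 1 + (n:ℤ) by ring, zpow_add, zpow_one]
      rw [e0, mul_assoc, ih, mul_smul_comm, ← mul_assoc, h, smul_mul_assoc, smul_smul,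
        mul_assoc, ← Units.val_mul, e1, ← zpow_add_one₀ hc]
  | pred n ih =>
      have e0 : ((x ^ (-(n:ℤ) - 1) : Aˣ) : A) = ((x⁻¹:Aˣ) : A) * ((x ^ (-(n:ℤ)) : Aˣ) : A) := by
        rw [← Units.val_mul, ← zpow_neg_one, ← zpow_add x]; ring_nf
      have e1 : (x⁻¹ : Aˣ) * x ^ (-(n:ℤ)) = x ^ (-(n:ℤ) - 1) := by
        rw [← zpow_neg_one, ← zpow_add]; ring_nf
      rw [e0, mul_assoc, ih, mul_smul_comm, ← mul_assoc, hinv, smul_mul_assoc, smul_smul,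
        mul_assoc, ← Units.val_mul, e1, ← zpow_sub_one₀ hc]


lemma upper_zpow {A : Type*} [Ring A] (x : Aˣ) (β : A)
    (hx : ∀ p : ℤ, ((x ^ p : Aˣ) : A) * β = β * ((x ^ (-p) : Aˣ) : A))
    (V : (Matrix (Fin 2) (Fin 2) A)ˣ)
    (hV : V.val = !![(x : A), β; 0, ((x⁻¹ : Aˣ) : A)]) :
    ∀ n : ℤ, (V ^ n).val
      = !![((x ^ n : Aˣ) : A), n • (β * ((x ^ (1 - n) : Aˣ) : A)); 0, ((x ^ (-n) : Aˣ) : A)] := by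
  have hx1 : (x : A) * β = β * ((x⁻¹ : Aˣ) : A) := by simpa using hx 1
  have hVinv : (V⁻¹).val = !![((x⁻¹ : Aˣ) : A), -(β * ((x : A) * (x : A))); 0, (x : A)] := by
    apply Units.inv_eq_of_mul_eq_one_right
    rw [hV, Matrix.mul_fin_two]
    have hc : (x:A) * -(β * ((x:A) * (x:A))) + β * (x:A) = 0 := by
      rw [mul_neg, ← mul_assoc, hx1, mul_assoc, ← mul_assoc ((x⁻¹:Aˣ):A), Units.inv_mul,
        one_mul, neg_add_cancel]
    rw [hc, Matrix.one_fin_two]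
    simp
  intro n
  induction n using Int.induction_on with
  | zero => simp [Matrix.one_fin_two]
  | succ n ih =>
      rw [zpow_add_one, Units.val_mul, ih, hV, Matrix.mul_fin_two]
      simp only [mul_zero, zero_mul, add_zero, zero_add]
      have u1 : ((x ^ (n:ℤ) : Aˣ) : A) * (x : A) = ((x ^ ((n:ℤ)+1) : Aˣ) : A) := by
        rw [← Units.val_mul, ← zpow_add_one]
      have u2 : ((x ^ (-(n:ℤ)) : Aˣ) : A) * ((x⁻¹ : Aˣ) : A) = ((x ^ (-((n:ℤ)+1)) : Aˣ) : A) := by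
        rw [show (-((n:ℤ)+1)) = -(n:ℤ) - 1 by ring, zpow_sub_one, Units.val_mul]
      have u3 : ((x ^ (1-(n:ℤ)) : Aˣ) : A) * ((x⁻¹ : Aˣ) : A) = ((x ^ (1-((n:ℤ)+1)) : Aˣ) : A) := by
        rw [show (1-((n:ℤ)+1)) = (1-(n:ℤ)) - 1 by ring, zpow_sub_one, Units.val_mul]
      have hcorner : ((x ^ (n:ℤ) : Aˣ) : A) * β + (n:ℤ) • (β * ((x ^ (1-(n:ℤ)) : Aˣ) : A)) * ((x⁻¹:Aˣ):A)
          = ((n:ℤ)+1) • (β * ((x ^ (1-((n:ℤ)+1)) : Aˣ) : A)) := by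
        rw [hx n, smul_mul_assoc, mul_assoc β, u3,
          show (-(n:ℤ)) = 1 - ((n:ℤ)+1) by ring, add_smul, one_smul, add_comm (((n:ℤ)) • _)]
      rw [u1, u2, hcorner]
  | pred n ih =>
      rw [show (-(n:ℤ) - 1) = (-(n:ℤ)) + (-1) by ring, zpow_add, zpow_neg_one,
        Units.val_mul, ih, hVinv, Matrix.mul_fin_two,
        show (-(n:ℤ) + -1) = -(n:ℤ) - 1 by ring]
      simp only [mul_zero, zero_mul, add_zero, zero_add]
      have u1 : ((x ^ (-(n:ℤ)) : Aˣ) : A) * ((x⁻¹:Aˣ) : A) = ((x ^ (-(n:ℤ)-1) : Aˣ) : A) := by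
        rw [zpow_sub_one, Units.val_mul]
      have u2 : ((x ^ (-(-(n:ℤ))) : Aˣ) : A) * (x : A) = ((x ^ (-(-(n:ℤ)-1)) : Aˣ) : A) := by
        rw [show (-(-(n:ℤ)-1)) = (-(-(n:ℤ))) + 1 by ring, zpow_add_one, Units.val_mul]
      have u3 : ((x ^ (1-(-(n:ℤ))) : Aˣ) : A) * (x:A) = ((x ^ (1-(-(n:ℤ)-1)) : Aˣ) : A) := by
        rw [show (1-(-(n:ℤ)-1)) = (1-(-(n:ℤ))) + 1 by ring, zpow_add_one, Units.val_mul]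
      have t1 : ((x ^ (-(n:ℤ)) : Aˣ) : A) * -(β * ((x:A) * (x:A)))
          = -(β * ((x ^ (1 - (-(n:ℤ)-1)) : Aˣ) : A)) := by
        rw [mul_neg, ← mul_assoc, hx (-(n:ℤ)), mul_assoc β,
          ← mul_assoc ((x ^ (-(-(n:ℤ))) : Aˣ) : A), u2]
        rw [show ((x ^ (-(-(n:ℤ)-1)) : Aˣ) : A) * (x:A) = ((x ^ (1-(-(n:ℤ)-1)) : Aˣ) : A) from by
          rw [show (1-(-(n:ℤ)-1)) = (-(-(n:ℤ)-1)) + 1 by ring, zpow_add_one, Units.val_mul]]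
      have t2 : (-(n:ℤ)) • (β * ((x ^ (1 - -(n:ℤ)) : Aˣ) : A)) * (x:A)
          = (-(n:ℤ)) • (β * ((x ^ (1 - (-(n:ℤ)-1)) : Aˣ) : A)) := by
        rw [smul_mul_assoc, mul_assoc β, u3]
      have hcorner : ((x ^ (-(n:ℤ)) : Aˣ) : A) * -(β * ((x:A) * (x:A)))
            + (-(n:ℤ)) • (β * ((x ^ (1 - -(n:ℤ)) : Aˣ) : A)) * (x:A)
          = (-(n:ℤ)-1) • (β * ((x ^ (1 - (-(n:ℤ)-1)) : Aˣ) : A)) := by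
        rw [t1, t2, sub_smul, one_smul]
        abel
      rw [u1, u2, hcorner]

theorem typeI_nondiagonal_relation {k A : Type*} [Field k] [CharZero k] [Ring A] [Algebra k A]
    (q : k) (hq0 : q ≠ 0) (hq1 : q ≠ 1)
    (α₁ γ₁ α₂ γ₂ : Aˣ) (β₁ β₂ : A)
    (hI1 : (α₁ : A) * (γ₁ : A) = 1) (hI1' : (γ₁ : A) * (α₁ : A) = 1)
    (hI2 : (α₂ : A) * (γ₂ : A) = 1) (hI2' : (γ₂ : A) * (α₂ : A) = 1)
    (hB1 : (α₁ : A) * β₁ = β₁ * (γ₁ : A)) (hB2 : (α₂ : A) * β₂ = β₂ * (γ₂ : A))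
    (hAA : (α₁ : A) * (α₂ : A) = q • ((α₂ : A) * (α₁ : A)))
    (hAB : (α₁ : A) * β₂ = q • (β₂ * (γ₁ : A)))
    (hBC : β₁ * (γ₂ : A) = q • ((α₂ : A) * β₁))
    (V₁ V₂ : (Matrix (Fin 2) (Fin 2) A)ˣ)
    (hV₁ : V₁.val = !![(α₁ : A), β₁; 0, (γ₁ : A)])
    (hV₂ : V₂.val = !![(α₂ : A), β₂; 0, (γ₂ : A)]) :
    ∀ n m : ℤ,
      (V₁ ^ n * V₂ ^ m).val 0 0 *
        (V₁ ^ n * V₂ ^ m).val 0 1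
        = (V₁ ^ n * V₂ ^ m).val 0 1 *
          (V₁ ^ n * V₂ ^ m).val 1 1 := by
  -- γᵢ is the inverse of αᵢ
  have hg1 : γ₁ = α₁⁻¹ := by
    have : α₁ * γ₁ = 1 := Units.ext (by rw [Units.val_mul, hI1, Units.val_one])
    exact (inv_eq_of_mul_eq_one_right this).symm
  have hg2 : γ₂ = α₂⁻¹ := by
    have : α₂ * γ₂ = 1 := Units.ext (by rw [Units.val_mul, hI2, Units.val_one])
    exact (inv_eq_of_mul_eq_one_right this).symm
  -- internal relations in zpow form
  have hswap1 : ∀ p : ℤ, ((α₁ ^ p : Aˣ) : A) * β₁ = β₁ * ((α₁ ^ (-p) : Aˣ) : A) := fun p => by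
    simpa using zpow_swap (1:k) one_ne_zero α₁ β₁ (by rw [one_smul, ← hg1]; exact hB1) p
  have hswap2 : ∀ p : ℤ, ((α₂ ^ p : Aˣ) : A) * β₂ = β₂ * ((α₂ ^ (-p) : Aˣ) : A) := fun p => by
    simpa using zpow_swap (1:k) one_ne_zero α₂ β₂ (by rw [one_smul, ← hg2]; exact hB2) p
  -- mixed relations in zpow form
  have hM2 : ∀ p : ℤ, ((α₁ ^ p : Aˣ) : A) * β₂ = q ^ p • (β₂ * ((α₁ ^ (-p) : Aˣ) : A)) :=
    zpow_swap q hq0 α₁ β₂ (by rw [← hg1]; exact hAB)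
  have hM3 : ∀ l : ℤ, ((α₂ ^ l : Aˣ) : A) * β₁ = q ^ (-l) • (β₁ * ((α₂ ^ (-l) : Aˣ) : A)) := by
    have h0 : (α₂ : A) * β₁ = q⁻¹ • (β₁ * ((α₂⁻¹ : Aˣ) : A)) := by
      rw [← hg2]
      have := congrArg (fun z => q⁻¹ • z) hBC
      simp only [smul_smul, inv_mul_cancel₀ hq0, one_smul] at this
      rw [← this]
    intro l
    rw [zpow_swap q⁻¹ (inv_ne_zero hq0) α₂ β₁ h0 l, inv_zpow, ← zpow_neg]
  have hM1 : ∀ p : ℤ, ((α₁ ^ p : Aˣ) : A) * (α₂ : A) = q ^ p • ((α₂ : A) * ((α₁ ^ p : Aˣ) : A)) :=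
    zpow_swap_u q hq0 α₁ (α₂ : A) hAA
  -- b past a
  have hba : ∀ p l : ℤ, ((α₂ ^ l : Aˣ) : A) * ((α₁ ^ p : Aˣ) : A)
      = q ^ (-(p*l)) • (((α₁ ^ p : Aˣ) : A) * ((α₂ ^ l : Aˣ) : A)) := by
    intro p l
    have h0 : (α₂ : A) * ((α₁ ^ p : Aˣ) : A) = (q^p)⁻¹ • (((α₁ ^ p : Aˣ) : A) * (α₂ : A)) := by
      have := congrArg (fun z => (q^p)⁻¹ • z) (hM1 p)
      simp only [smul_smul, inv_mul_cancel₀ (zpow_ne_zero p hq0), one_smul] at this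
      rw [← this]
    rw [zpow_swap_u (q^p)⁻¹ (inv_ne_zero (zpow_ne_zero p hq0)) α₂ (((α₁ ^ p : Aˣ)) : A) h0 l,
      inv_zpow, ← zpow_neg, ← zpow_mul, mul_neg]
  -- matrix power formulas
  have P1 := upper_zpow α₁ β₁ hswap1 V₁ (by rw [hV₁, hg1])
  have P2 := upper_zpow α₂ β₂ hswap2 V₂ (by rw [hV₂, hg2])
  intro n m
  rw [Units.val_mul, P1 n, P2 m, Matrix.mul_fin_two]
  simp only [Matrix.of_apply, Matrix.cons_val', Matrix.cons_val_zero, Matrix.cons_val_one, Matrix.head_cons,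
    Matrix.head_fin_const, Matrix.empty_val', Matrix.cons_val_fin_one, mul_zero, zero_mul,
    add_zero, zero_add]
  have ha' : ∀ p r : ℤ, ∀ t : A, ((α₁^p:Aˣ):A) * (((α₁^r:Aˣ):A) * t) = ((α₁^(p+r):Aˣ):A) * t := by
    intro p r t; rw [← mul_assoc, ← Units.val_mul, ← zpow_add]
  have ha0 : ∀ p r : ℤ, ((α₁^p:Aˣ):A) * ((α₁^r:Aˣ):A) = ((α₁^(p+r):Aˣ):A) := by
    intro p r; rw [← Units.val_mul, ← zpow_add]
  have hb' : ∀ p r : ℤ, ∀ t : A, ((α₂^p:Aˣ):A) * (((α₂^r:Aˣ):A) * t) = ((α₂^(p+r):Aˣ):A) * t := by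
    intro p r t; rw [← mul_assoc, ← Units.val_mul, ← zpow_add]
  have hb0 : ∀ p r : ℤ, ((α₂^p:Aˣ):A) * ((α₂^r:Aˣ):A) = ((α₂^(p+r):Aˣ):A) := by
    intro p r; rw [← Units.val_mul, ← zpow_add]
  have hba' : ∀ p l : ℤ, ∀ t : A, ((α₂^l:Aˣ):A) * (((α₁^p:Aˣ):A) * t)
      = q^(-(p*l)) • (((α₁^p:Aˣ):A) * (((α₂^l:Aˣ):A) * t)) := by
    intro p l t; rw [← mul_assoc, hba p l, smul_mul_assoc, mul_assoc]
  have hM2' : ∀ p : ℤ, ∀ t : A, ((α₁^p:Aˣ):A) * (β₂ * t)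
      = q^p • (β₂ * (((α₁^(-p):Aˣ):A) * t)) := by
    intro p t; rw [← mul_assoc, hM2 p, smul_mul_assoc, mul_assoc]
  have hM3' : ∀ l : ℤ, ∀ t : A, ((α₂^l:Aˣ):A) * (β₁ * t)
      = q^(-l) • (β₁ * (((α₂^(-l):Aˣ):A) * t)) := by
    intro l t; rw [← mul_assoc, hM3 l, smul_mul_assoc, mul_assoc]
  have hs1' : ∀ p : ℤ, ∀ t : A, ((α₁^p:Aˣ):A) * (β₁ * t) = β₁ * (((α₁^(-p):Aˣ):A) * t) := by
    intro p t; rw [← mul_assoc, hswap1 p, mul_assoc]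
  have hs2' : ∀ l : ℤ, ∀ t : A, ((α₂^l:Aˣ):A) * (β₂ * t) = β₂ * (((α₂^(-l):Aˣ):A) * t) := by
    intro l t; rw [← mul_assoc, hswap2 l, mul_assoc]
  rw [mul_add, add_mul]
  congr 1
  · simp only [mul_smul_comm, smul_mul_assoc]
    congr 1
    simp only [mul_assoc, ha', ha0, hb', hb0, hba', hba, hM2', hM2, hM3', hM3, hs1', hswap1,
      hs2', hswap2, smul_mul_assoc, mul_smul_comm, smul_smul, ← zpow_add₀ hq0]
    rw [show (-(m:ℤ) + (1-m)) = 1 - m + -m by ring,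
      show ((n:ℤ) + (-(-n * -m) + n)) = n + -(-n*(1-m)) by ring]
  · simp only [mul_smul_comm, smul_mul_assoc]
    congr 1
    simp only [mul_assoc, ha', ha0, hb', hb0, hba', hba, hM2', hM2, hM3', hM3, hs1', hswap1,
      hs2', hswap2, smul_mul_assoc, mul_smul_comm, smul_smul, ← zpow_add₀ hq0]
    rw [show (-(n:ℤ) + (1-n)) = 1 - n + -n by ring,
      show (-(m:ℤ) + -((1-n) * -m)) = -(-n * -m) by ring]
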